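/- Let B be a real symmetric n×n matrix and set β(x,y) = xᵀBy. Suppose there exists a function χ : ℤⁿ × ℤⁿ → ℂ, nowhere zero, such that exp(−2πi·β(x,y')) = χ(x+x', y+y') · χ(x,y)⁻¹ · χ(x',y')⁻¹ for all x, y, x', y' ∈ ℤⁿ (i.e. χ splits the cocycle e(−β(x,y'))). Then β(x,y) ∈ ℤ for all x, y ∈ ℤⁿ, i.e. B has integer entries. -/

import Mathlib

open Matrix

/-- If the cocycle `e(−β(x,y'))` on `ℤⁿ × ℤⁿ` attached to a real
symmetric matrix `B` splits (i.e. is a coboundary of some nowhere-vanishing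
function `χ`), then the bilinear form `β(x,y) = xᵀBy` takes integer values on
`ℤⁿ`, i.e. `B` has integer entries. -/
theorem integral_of_cocycle_splits
    {n : ℕ} (B : Matrix (Fin n) (Fin n) ℝ) (hB : B.IsSymm)
    (χ : (Fin n → ℤ) × (Fin n → ℤ) → ℂ) (hne : ∀ v, χ v ≠ 0)
    (hsplit : ∀ x y x' y' : Fin n → ℤ,
      Complex.exp (-2 * (Real.pi : ℂ) * Complex.I *
          ((((fun i => (x i : ℝ)) ⬝ᵥ B.mulVec (fun i => (y' i : ℝ))) : ℝ) : ℂ)) =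
        χ (x + x', y + y') * (χ (x, y))⁻¹ * (χ (x', y'))⁻¹) :
    ∀ x y : Fin n → ℤ, ∃ m : ℤ,
      (fun i => (x i : ℝ)) ⬝ᵥ B.mulVec (fun i => (y i : ℝ)) = (m : ℝ) := by
  intro x y
  have h1 := hsplit x 0 0 y
  have h2 := hsplit 0 y x 0
  simp only [add_zero, zero_add] at h1 h2
  have hzero : ((fun i => ((0 : Fin n → ℤ) i : ℝ)) ⬝ᵥ B.mulVec
      (fun i => ((0 : Fin n → ℤ) i : ℝ))) = 0 := by
    simp [dotProduct]
  rw [hzero] at h2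
  have heq : Complex.exp (-2 * (Real.pi : ℂ) * Complex.I *
      ((((fun i => (x i : ℝ)) ⬝ᵥ B.mulVec (fun i => (y i : ℝ))) : ℝ) : ℂ)) = 1 := by
    rw [h1, mul_right_comm, ← h2]
    norm_num
  rw [Complex.exp_eq_one_iff] at heq
  obtain ⟨k, hk⟩ := heq
  refine ⟨-k, ?_⟩
  set β : ℝ := (fun i => (x i : ℝ)) ⬝ᵥ B.mulVec (fun i => (y i : ℝ))
  have hπ : (Real.pi : ℂ) ≠ 0 := by exact_mod_cast Real.pi_ne_zero
  have : (β : ℂ) = (-k : ℤ) := by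
    have h2pi : (-2 : ℂ) * Real.pi * Complex.I ≠ 0 := by
      simp [Complex.I_ne_zero, hπ]
    field_simp at hk
    push_cast
    have : (-2 : ℂ) * Real.pi * Complex.I * β = (-2 : ℂ) * Real.pi * Complex.I * (-k) := by
      linear_combination (2 * (Real.pi : ℂ) * Complex.I) * hk
    exact mul_left_cancel₀ h2pi this
  exact_mod_cast this
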